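/- In each of the following six cases the given functions satisfy the Toda lattice equations on the indicated t-interval: (i) Hermite: b_n(t) = −t/2, c_n(t) = n/2, for t ∈ ℝ; (ii) Laguerre: for α > −1, b_n(t) = (2n+α+1)/(1+t), c_n(t) = n(n+α)/(1+t)², for t > −1; (iii) Charlier: for a > 0, b_n(t) = n + a·e^{−t}, c_n(t) = n·a·e^{−t}, for t ∈ ℝ; (iv) Meixner: for β > 0 and 0 < c < 1, b_n(t) = (n(c·e^{−t}+1) + β·c·e^{−t})/(1 − c·e^{−t}), c_n(t) = n(n+β−1)·c·e^{−t}/(1 − c·e^{−t})², for t > ln(c); (v) Meixner–Pollaczek: for λ > 0 and 0 < φ < π, b_n(t) = −(n+λ)·cos(φ − t/2)/sin(φ − t/2), c_n(t) = n(n+2λ−1)/(4 sin²(φ − t/2)), for 2φ−2π < t < 2φ; (vi) Krawtchouk: for N ∈ ℕ and 0 < p < 1, b_n(t) = (p·e^{−t}(N−n) + n(1−p))/(1 + p(e^{−t}−1)), c_n(t) = n(N+1−n)·e^{−t}·p(1−p)/(1 + p(e^{−t}−1))², for t ∈ ℝ and n ∈ {0,…,N}, where in this case the equations are imposed for 0 ≤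 n ≤ N (the same formula gives c_{N+1} ≡ 0). -/

import Mathlib

open Real

/-- The Toda lattice equations on a set `s ⊆ ℝ` for `b_n` (n ≥ 0) and `c_n` (n ≥ 1), with the
convention `c_0 = 0`: `ċ_n = c_n (b_{n-1} - b_n)` for `n ≥ 1` and `ḃ_n = c_n - c_{n+1}`. -/
def IsTodaSolution (b c : ℕ → ℝ → ℝ) (s : Set ℝ) : Prop :=
  (∀ t ∈ s, c 0 t = 0) ∧
  (∀ n : ℕ, 1 ≤ n → ∀ t ∈ s, HasDerivAt (c n) (c n t * (b (n - 1) t - b n t)) t) ∧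
  (∀ n : ℕ, ∀ t ∈ s, HasDerivAt (b n) (c n t - c (n + 1) t) t)

/-- The Toda lattice equations imposed only for indices `0 ≤ n ≤ N`. -/
def IsTodaSolutionUpTo (N : ℕ) (b c : ℕ → ℝ → ℝ) (s : Set ℝ) : Prop :=
  (∀ t ∈ s, c 0 t = 0) ∧
  (∀ n : ℕ, 1 ≤ n → n ≤ N → ∀ t ∈ s, HasDerivAt (c n) (c n t * (b (n - 1) t - b n t)) t) ∧
  (∀ n : ℕ, n ≤ N → ∀ t ∈ s, HasDerivAt (b n) (c n t - c (n + 1) t) t)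

theorem explicit_toda_solutions :
    -- (i) Hermite
    (IsTodaSolution (fun _ t => -t / 2) (fun n _ => (n : ℝ) / 2) Set.univ) ∧
    -- (ii) Laguerre
    (∀ α : ℝ, -1 < α →
      IsTodaSolution (fun n t => (2 * n + α + 1) / (1 + t))
        (fun n t => (n : ℝ) * (n + α) / (1 + t) ^ 2) (Set.Ioi (-1))) ∧
    -- (iii) Charlier
    (∀ a : ℝ, 0 < a →
      IsTodaSolution (fun n t => (n : ℝ) + a * exp (-t))
        (fun n t => (n : ℝ) * a * exp (-t)) Set.univ) ∧
    -- (iv) Meixner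
    (∀ β c : ℝ, 0 < β → 0 < c → c < 1 →
      IsTodaSolution
        (fun n t => ((n : ℝ) * (c * exp (-t) + 1) + β * c * exp (-t)) / (1 - c * exp (-t)))
        (fun n t => (n : ℝ) * ((n : ℝ) + β - 1) * c * exp (-t) / (1 - c * exp (-t)) ^ 2)
        (Set.Ioi (Real.log c))) ∧
    -- (v) Meixner–Pollaczek
    (∀ lam φ : ℝ, 0 < lam → 0 < φ → φ < π →
      IsTodaSolution
        (fun n t => -((n : ℝ) + lam) * cos (φ - t / 2) / sin (φ - t / 2))
        (fun n t => (n : ℝ) * ((n : ℝ) + 2 * lam - 1) / (4 * sin (φ - t / 2) ^ 2))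
        (Set.Ioo (2 * φ - 2 * π) (2 * φ))) ∧
    -- (vi) Krawtchouk
    (∀ (N : ℕ) (p : ℝ), 0 < p → p < 1 →
      IsTodaSolutionUpTo N
        (fun n t => (p * exp (-t) * ((N : ℝ) - n) + (n : ℝ) * (1 - p)) / (1 + p * (exp (-t) - 1)))
        (fun n t => (n : ℝ) * ((N : ℝ) + 1 - n) * exp (-t) * p * (1 - p) /
          (1 + p * (exp (-t) - 1)) ^ 2)
        Set.univ ∧
      (∀ t : ℝ, ((N + 1 : ℕ) : ℝ) * ((N : ℝ) + 1 - (N + 1 : ℕ)) * exp (-t) * p * (1 - p) /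
          (1 + p * (exp (-t) - 1)) ^ 2 = 0)) := by
  refine ⟨⟨fun t _ => by norm_num, ?_, ?_⟩, ?_, ?_, ?_, ?_, ?_⟩
  -- (i) Hermite c-equation
  · intro n hn t _
    have h := hasDerivAt_const t ((n : ℝ) / 2)
    refine h.congr_deriv (Eq.symm ?_)
    ring
  -- (i) Hermite b-equation
  · intro n t _
    have h : HasDerivAt (fun t : ℝ => -t / 2) (-1 / 2) t := by
      simpa using ((hasDerivAt_id t).neg.div_const 2)
    convert h using 1
    push_cast
    ring
  -- (ii) Laguerre
  · intro α hα
    refine ⟨fun t _ => by norm_num, ?_, ?_⟩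
    · intro n hn t ht
      obtain ⟨m, rfl⟩ : ∃ m, n = m + 1 := ⟨n - 1, by omega⟩
      have hpos : (0:ℝ) < 1 + t := by have := Set.mem_Ioi.mp ht; linarith
      have hne : (1:ℝ) + t ≠ 0 := ne_of_gt hpos
      have h := (hasDerivAt_const t (((m:ℕ)+1 : ℕ) * (((m:ℕ)+1 : ℕ) + α) : ℝ)).div
        (((hasDerivAt_const t 1).add (hasDerivAt_id t)).pow 2) (pow_ne_zero 2 hne)
      refine h.congr_deriv (Eq.symm ?_)
      simp only [Pi.add_apply, Pi.sub_apply, Pi.mul_apply, Pi.div_apply, Pi.pow_apply, id_eq]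
      simp only [Nat.add_sub_cancel]
      push_cast
      field_simp
      ring
    · intro n t ht
      have hpos : (0:ℝ) < 1 + t := by have := Set.mem_Ioi.mp ht; linarith
      have hne : (1:ℝ) + t ≠ 0 := ne_of_gt hpos
      have h := (hasDerivAt_const t (2 * (n:ℝ) + α + 1)).div
        ((hasDerivAt_const t 1).add (hasDerivAt_id t)) hne
      refine h.congr_deriv (Eq.symm ?_)
      simp only [Pi.add_apply, Pi.sub_apply, Pi.mul_apply, Pi.div_apply, Pi.pow_apply, id_eq]
      push_cast
      field_simp
      ring
  -- (iii) Charlier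
  · intro a ha
    have hexp : ∀ t : ℝ, HasDerivAt (fun t : ℝ => exp (-t)) (exp (-t) * -1) t :=
      fun t => (hasDerivAt_id t).neg.exp
    refine ⟨fun t _ => by norm_num, ?_, ?_⟩
    · intro n hn t _
      obtain ⟨m, rfl⟩ : ∃ m, n = m + 1 := ⟨n - 1, by omega⟩
      have h := (hasDerivAt_const t (((m+1 : ℕ) : ℝ) * a)).mul (hexp t)
      refine h.congr_deriv (Eq.symm ?_)
      simp only [Nat.add_sub_cancel]
      push_cast
      ring
    · intro n t _
      have h := (hasDerivAt_const t (n : ℝ)).add ((hasDerivAt_const t a).mul (hexp t))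
      refine h.congr_deriv (Eq.symm ?_)
      push_cast
      ring
  -- (iv) Meixner
  · intro β c hβ hc hc1
    have hexp : ∀ t : ℝ, HasDerivAt (fun t : ℝ => exp (-t)) (exp (-t) * -1) t :=
      fun t => (hasDerivAt_id t).neg.exp
    refine ⟨fun t _ => by norm_num, ?_, ?_⟩
    all_goals
      first
      | (intro n hn t ht; obtain ⟨m, rfl⟩ : ∃ m, n = m + 1 := ⟨n - 1, by omega⟩)
      | intro n t ht
    all_goals
      have h1 : exp (-t) < exp (-Real.log c) :=
        Real.exp_lt_exp.mpr (neg_lt_neg (Set.mem_Ioi.mp ht))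
      have h2 : c * exp (-t) < 1 := by
        have hlog : exp (-Real.log c) = c⁻¹ := by
          rw [Real.exp_neg, Real.exp_log hc]
        rw [hlog] at h1
        have h3 := mul_lt_mul_of_pos_left h1 hc
        rwa [mul_inv_cancel₀ (ne_of_gt hc)] at h3
      have hpos : (0:ℝ) < 1 - c * exp (-t) := by linarith
      have hne : (1:ℝ) - c * exp (-t) ≠ 0 := ne_of_gt hpos
      have hu := (hasDerivAt_const t c).mul (hexp t)
      have hden := (hasDerivAt_const t 1).sub hu
    · have h := ((hasDerivAt_const t (((m+1:ℕ):ℝ) * (((m+1:ℕ):ℝ) + β - 1) * c)).mul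
        (hexp t)).div (hden.pow 2) (pow_ne_zero 2 hne)
      refine h.congr_deriv (Eq.symm ?_)
      simp only [Pi.add_apply, Pi.sub_apply, Pi.mul_apply, Pi.div_apply, Pi.pow_apply, id_eq]
      simp only [Nat.add_sub_cancel]
      push_cast
      field_simp
      ring
    · have hnum := ((hasDerivAt_const t (n:ℝ)).mul (hu.add_const 1)).add
        ((hasDerivAt_const t (β * c)).mul (hexp t))
      have h := hnum.div hden hne
      refine h.congr_deriv (Eq.symm ?_)
      simp only [Pi.add_apply, Pi.sub_apply, Pi.mul_apply, Pi.div_apply, Pi.pow_apply, id_eq]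
      push_cast
      field_simp
      ring
  -- (v) Meixner–Pollaczek
  · intro lam φ hlam hφ hφπ
    refine ⟨fun t _ => by norm_num, ?_, ?_⟩
    all_goals
      first
      | (intro n hn t ht; obtain ⟨m, rfl⟩ : ∃ m, n = m + 1 := ⟨n - 1, by omega⟩)
      | intro n t ht
    all_goals
      obtain ⟨ht1, ht2⟩ := ht
      have hsin : (0:ℝ) < sin (φ - t / 2) :=
        Real.sin_pos_of_pos_of_lt_pi (by linarith) (by linarith)
      have hsne : sin (φ - t / 2) ≠ 0 := ne_of_gt hsin
      have hθ : HasDerivAt (fun t : ℝ => φ - t / 2) (0 - 1 / 2) t :=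
        (hasDerivAt_const t φ).sub ((hasDerivAt_id t).div_const 2)
      have hpyth := Real.sin_sq_add_cos_sq (φ - t / 2)
    · have hdne : (4:ℝ) * sin (φ - t / 2) ^ 2 ≠ 0 :=
        mul_ne_zero (by norm_num) (pow_ne_zero 2 hsne)
      have h := (hasDerivAt_const t (((m+1:ℕ):ℝ) * (((m+1:ℕ):ℝ) + 2 * lam - 1))).div
        ((hasDerivAt_const t 4).mul (hθ.sin.pow 2)) hdne
      refine h.congr_deriv (Eq.symm ?_)
      simp only [Nat.add_sub_cancel]
      push_cast
      norm_num
      set S := sin (φ - t / 2) with hS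
      set C := cos (φ - t / 2) with hC
      field_simp
      ring
    · have h := ((hasDerivAt_const t (-((n:ℝ) + lam))).mul hθ.cos).div hθ.sin hsne
      refine h.congr_deriv (Eq.symm ?_)
      push_cast
      norm_num
      set S := sin (φ - t / 2) with hS
      set C := cos (φ - t / 2) with hC
      field_simp
      linear_combination (4 * ((n:ℝ) + lam)) * hpyth
  -- (vi) Krawtchouk
  · intro N p hp hp1
    have hexp : ∀ t : ℝ, HasDerivAt (fun t : ℝ => exp (-t)) (exp (-t) * -1) t :=
      fun t => (hasDerivAt_id t).neg.exp
    constructor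
    · refine ⟨fun t _ => by norm_num, ?_, ?_⟩
      all_goals
        first
        | (intro n hn hnN t ht; obtain ⟨m, rfl⟩ : ∃ m, n = m + 1 := ⟨n - 1, by omega⟩)
        | intro n hnN t ht
      all_goals
        have hepos : (0:ℝ) < exp (-t) := Real.exp_pos _
        have hpos : (0:ℝ) < 1 + p * (exp (-t) - 1) := by nlinarith
        have hne : (1:ℝ) + p * (exp (-t) - 1) ≠ 0 := ne_of_gt hpos
        have hD := (hasDerivAt_const t 1).add
          ((hasDerivAt_const t p).mul ((hexp t).sub (hasDerivAt_const t 1)))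
      · have h := ((((hasDerivAt_const t (((m+1:ℕ):ℝ) * ((N:ℝ) + 1 - ((m+1:ℕ):ℝ)))).mul
          (hexp t)).mul (hasDerivAt_const t p)).mul (hasDerivAt_const t (1 - p))).div
          (hD.pow 2) (pow_ne_zero 2 hne)
        refine h.congr_deriv (Eq.symm ?_)
        simp only [Pi.add_apply, Pi.sub_apply, Pi.mul_apply, Pi.div_apply, Pi.pow_apply, id_eq]
        simp only [Nat.add_sub_cancel]
        push_cast
        field_simp
        ring
      · have h := ((((hasDerivAt_const t p).mul (hexp t)).mul
          (hasDerivAt_const t ((N:ℝ) - (n:ℝ)))).add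
          (hasDerivAt_const t ((n:ℝ) * (1 - p)))).div hD hne
        refine h.congr_deriv (Eq.symm ?_)
        simp only [Pi.add_apply, Pi.sub_apply, Pi.mul_apply, Pi.div_apply, Pi.pow_apply, id_eq]
        push_cast
        field_simp
        ring
    · intro t
      push_cast
      ring_nf
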